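/- arXiv:1611.07692 — 5 statements merged into one kernel-verified Lean document; each statement's English description precedes it below -/
import Mathlib

section
/- Let λ > 0 and μ = (1/π) log(1 - e^{-λ}) < 0. Let a_1 < b_1 < a_2 < ... < a_n < b_n be real numbers, and suppose c_1, …, c_n are real numbers with c_k ∈ (b_{k-1}, a_k) (where b_0 = -∞) satisfying (1/π) ∑_{k=1}^n log |(c_j - a_k)/(c_j - b_k)| = μ for each j. Then the polynomial identity e^{πμ} ∏_{k=1}^n (x - b_k) - ∏_{k=1}^n (x - a_k) = (e^{πμ} - 1) ∏_{k=1}^n (x - c_k) holds for all x ∈ ℝ. -/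
open MeasureTheory Filter Set Real Polynomial

lemma aux_strictMono {n : ℕ} {f : Fin n → ℝ}
    (h : ∀ k l : Fin n, (k : ℕ) + 1 = (l : ℕ) → f k < f l) : StrictMono f := by
  have key : ∀ d : ℕ, ∀ k l : Fin n, (l : ℕ) = (k : ℕ) + 1 + d → f k < f l := by
    intro d
    induction d with
    | zero => intro k l hd; exact h k l (by omega)
    | succ d ih =>
        intro k l hd
        have hm : (k : ℕ) + 1 + d < n := by have := l.isLt; omega
        exact (ih k ⟨_, hm⟩ rfl).trans (h ⟨_, hm⟩ l (by simp only [Fin.val_mk]; omega))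
  intro k l hkl
  exact key ((l : ℕ) - ((k : ℕ) + 1)) k l (by have : (k : ℕ) < l := hkl; omega)

lemma aux_poly {n : ℕ} (E : ℝ) (a b c : Fin n → ℝ) (hcinj : Function.Injective c)
    (hroot : ∀ j : Fin n, ∏ k, (c j - a k) = E * ∏ k, (c j - b k)) :
    ∀ x : ℝ, E * ∏ k, (x - b k) - ∏ k, (x - a k) = (E - 1) * ∏ k, (x - c k) := by
  set P : ℝ[X] := C E * ∏ k, (X - C (b k)) - ∏ k, (X - C (a k))
      - C (E - 1) * ∏ k, (X - C (c k)) with hP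
  have hmb : (∏ k : Fin n, (X - C (b k)) : ℝ[X]).Monic :=
    monic_prod_of_monic _ _ fun k _ => monic_X_sub_C (b k)
  have hma : (∏ k : Fin n, (X - C (a k)) : ℝ[X]).Monic :=
    monic_prod_of_monic _ _ fun k _ => monic_X_sub_C (a k)
  have hmc : (∏ k : Fin n, (X - C (c k)) : ℝ[X]).Monic :=
    monic_prod_of_monic _ _ fun k _ => monic_X_sub_C (c k)
  have hdb : (∏ k : Fin n, (X - C (b k)) : ℝ[X]).natDegree = n := by
    rw [natDegree_prod_of_monic _ _ fun k _ => monic_X_sub_C (b k)]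
    simp
  have hda : (∏ k : Fin n, (X - C (a k)) : ℝ[X]).natDegree = n := by
    rw [natDegree_prod_of_monic _ _ fun k _ => monic_X_sub_C (a k)]
    simp
  have hdc : (∏ k : Fin n, (X - C (c k)) : ℝ[X]).natDegree = n := by
    rw [natDegree_prod_of_monic _ _ fun k _ => monic_X_sub_C (c k)]
    simp
  have hdP : P.natDegree ≤ n :=
    le_trans (natDegree_sub_le _ _) (max_le
      (le_trans (natDegree_sub_le _ _) (max_le ((natDegree_C_mul_le _ _).trans hdb.le) hda.le))
      ((natDegree_C_mul_le _ _).trans hdc.le))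
  have hcoeffb : (∏ k : Fin n, (X - C (b k)) : ℝ[X]).coeff n = 1 := by
    have := hmb.leadingCoeff; rwa [leadingCoeff, hdb] at this
  have hcoeffa : (∏ k : Fin n, (X - C (a k)) : ℝ[X]).coeff n = 1 := by
    have := hma.leadingCoeff; rwa [leadingCoeff, hda] at this
  have hcoeffc : (∏ k : Fin n, (X - C (c k)) : ℝ[X]).coeff n = 1 := by
    have := hmc.leadingCoeff; rwa [leadingCoeff, hdc] at this
  have hcoeffP : P.coeff n = 0 := by
    rw [hP, coeff_sub, coeff_sub, coeff_C_mul, coeff_C_mul, hcoeffa, hcoeffb, hcoeffc]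
    ring
  have heval : ∀ j : Fin n, P.eval (c j) = 0 := by
    intro j
    have hc0 : (∏ k : Fin n, (c j - c k)) = 0 :=
      Finset.prod_eq_zero (Finset.mem_univ j) (by simp)
    simp [hP, eval_prod, hroot j, hc0]
  have hPzero : P = 0 := by
    by_contra hne
    have hlt : P.natDegree < n := by
      rcases lt_or_eq_of_le hdP with h | h
      · exact h
      · exact absurd (h ▸ hcoeffP) (by rw [← leadingCoeff]; exact leadingCoeff_ne_zero.mpr hne)
    exact hne (P.eq_zero_of_natDegree_lt_card_of_eval_eq_zero hcinj heval
      (by simpa using hlt))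
  intro x
  have h0 : P.eval x = 0 := by rw [hPzero]; simp
  have h1 : E * ∏ k, (x - b k) - ∏ k, (x - a k) - (E - 1) * ∏ k, (x - c k) = 0 := by
    simpa [hP, eval_prod] using h0
  linarith

/-- With `λ > 0`, `μ = (1/π) log(1 - e^{-λ})`, interlaced points
`a_1 < b_1 < ... < a_n < b_n` and `c_k ∈ (b_{k-1}, a_k)` (`b_0 = -∞`) which are
roots of `(1/π) ∑ log |(x - a_k)/(x - b_k)| = μ`, the polynomial identity
`e^{πμ} ∏ (x - b_k) - ∏ (x - a_k) = (e^{πμ} - 1) ∏ (x - c_k)` holds. -/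
theorem stmt3 (lam mu : ℝ) (hlam : 0 < lam)
    (hmu : mu = (1 / π) * Real.log (1 - Real.exp (-lam)))
    (n : ℕ) (a b c : Fin n → ℝ)
    (hab : ∀ k, a k < b k)
    (hba : ∀ k l : Fin n, (k : ℕ) + 1 = l → b k < a l)
    (hca : ∀ k, c k < a k)
    (hbc : ∀ k l : Fin n, (k : ℕ) + 1 = l → b k < c l)
    (hroot : ∀ j, (1 / π) * ∑ k, Real.log (|(c j - a k) / (c j - b k)|) = mu) :
    ∀ x : ℝ,
      Real.exp (π * mu) * ∏ k, (x - b k) - ∏ k, (x - a k)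
        = (Real.exp (π * mu) - 1) * ∏ k, (x - c k) := by
  set E := Real.exp (π * mu) with hE
  have hcmono : StrictMono c := by
    apply aux_strictMono
    intro k l hkl
    exact (hca k).trans ((hab k).trans (hbc k l hkl))
  have hratio : ∀ j k : Fin n, 0 < (c j - a k) / (c j - b k) := by
    intro j k
    rcases le_or_gt j k with h | h
    · have h1 : c j < a k := lt_of_le_of_lt (hcmono.le_iff_le.mpr h) (hca k)
      have h2 : c j < b k := h1.trans (hab k)
      exact div_pos_of_neg_of_neg (by linarith) (by linarith)
    · have hkj : (k : ℕ) < (j : ℕ) := h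
      have hkn : (k : ℕ) + 1 < n := by have := j.isLt; omega
      have hstep : b k < c ⟨(k : ℕ) + 1, hkn⟩ := hbc k ⟨_, hkn⟩ rfl
      have hle : c ⟨(k : ℕ) + 1, hkn⟩ ≤ c j := by
        apply hcmono.le_iff_le.mpr
        rw [Fin.le_def]; simp only [Fin.val_mk]; omega
      have h1 : b k < c j := lt_of_lt_of_le hstep hle
      have h2 : a k < c j := (hab k).trans h1
      exact div_pos (by linarith) (by linarith)
  have hroot' : ∀ j : Fin n, ∏ k, (c j - a k) = E * ∏ k, (c j - b k) := by
    intro j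
    have hπ : (π : ℝ) ≠ 0 := Real.pi_ne_zero
    have hsum : ∑ k, Real.log (|(c j - a k) / (c j - b k)|) = π * mu := by
      rw [← hroot j, one_div, ← mul_assoc, mul_inv_cancel₀ hπ, one_mul]
    have hprod : ∏ k, ((c j - a k) / (c j - b k)) = E := by
      have hEeq : Real.exp (∑ k, Real.log (|(c j - a k) / (c j - b k)|)) = E := by
        rw [hsum, hE]
      rw [Real.exp_sum] at hEeq
      rw [← hEeq]
      refine Finset.prod_congr rfl fun k _ => ?_
      rw [abs_of_pos (hratio j k), Real.exp_log (hratio j k)]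
    have hbne : ∀ k : Fin n, c j - b k ≠ 0 := by
      intro k hzero
      have := hratio j k
      rw [hzero, div_zero] at this
      exact lt_irrefl 0 this
    have hprodb : (∏ k, (c j - b k)) ≠ 0 := Finset.prod_ne_zero_iff.mpr fun k _ => hbne k
    rw [Finset.prod_div_distrib, div_eq_iff hprodb] at hprod
    linarith
  exact aux_poly E a b c hcmono.injective hroot'
end

section
/- Let λ > 0, μ = (1/π) log(1 - e^{-λ}), and let a_1 < b_1 < ... < a_n < b_n, c_1 < ... < c_n with c_k ∈ (b_{k-1}, a_k) (b_0 = -∞) satisfy e^{πμ} ∏_{k=1}^n (x - b_k) - ∏_{k=1}^n (x - a_k) = (e^{πμ} - 1) ∏_{k=1}^n (x - c_k) for all x. Then for each j, ∑_{k=1}^n log |(b_j - c_k)/(b_j - a_k)| = λ, i.e. H𝟙_E(b_j) = λ/π·π = λ where E = ⋃_{k=1}^n (c_k, a_k). -/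
open MeasureTheory Filter Set Real

/-- Under the polynomial identity and the interlacing conditions,
for each `j` one has `∑ k, log |(b j - c k)/(b j - a k)| = λ`, i.e. the Hilbert
transform of the indicator of `E = ⋃ (c_k, a_k)` equals `λ/π·π = λ` at `b j`
(up to the factor `1/π`, the sum of logarithms equals `πλ`; here stated as
`∑ log |(b j - c k)/(b j - a k)| = λ` following the paper's normalization). -/
theorem stmt5 (lam mu : ℝ) (hlam : 0 < lam)
    (hmu : mu = (1 / π) * Real.log (1 - Real.exp (-lam)))
    (n : ℕ) (a b c : Fin n → ℝ)
    (hab : ∀ k, a k < b k)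
    (hba : ∀ k l : Fin n, (k : ℕ) + 1 = l → b k < a l)
    (hca : ∀ k, c k < a k)
    (hbc : ∀ k l : Fin n, (k : ℕ) + 1 = l → b k < c l)
    (hid : ∀ x : ℝ,
      Real.exp (π * mu) * ∏ k, (x - b k) - ∏ k, (x - a k)
        = (Real.exp (π * mu) - 1) * ∏ k, (x - c k)) :
    ∀ j : Fin n,
      ∑ k, Real.log (|(b j - c k) / (b j - a k)|) = lam := by
  intro j
  -- exp(π μ) = 1 - exp(-lam)
  have hpos : (0 : ℝ) < 1 - Real.exp (-lam) := by
    have : Real.exp (-lam) < 1 := by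
      rw [Real.exp_lt_one_iff]; linarith
    linarith
  have hexp : Real.exp (π * mu) = 1 - Real.exp (-lam) := by
    rw [hmu]
    have hπ : (π : ℝ) ≠ 0 := Real.pi_ne_zero
    rw [show π * ((1 / π) * Real.log (1 - Real.exp (-lam)))
        = Real.log (1 - Real.exp (-lam)) by field_simp]
    exact Real.exp_log hpos
  -- general interlacing: k < l → b k < a l
  have hlt : ∀ m : ℕ, ∀ k l : Fin n, (k : ℕ) + m + 1 = (l : ℕ) → b k < a l := by
    intro m
    induction m with
    | zero =>
      intro k l h
      exact hba k l (by simpa using h)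
    | succ m ih =>
      intro k l h
      have hp : (k : ℕ) + m + 1 < n := by
        have := l.isLt; omega
      let p : Fin n := ⟨(k : ℕ) + m + 1, hp⟩
      have h1 : b k < a p := ih k p rfl
      have h2 : b p < a l := hba p l (by simp only [p]; omega)
      exact h1.trans ((hab p).trans h2)
  have hba' : ∀ k l : Fin n, (k : ℕ) < (l : ℕ) → b k < a l := by
    intro k l h
    exact hlt ((l : ℕ) - (k : ℕ) - 1) k l (by omega)
  -- a k ≠ b j and c k ≠ b j
  have hane : ∀ k : Fin n, b j - a k ≠ 0 := by
    intro k
    rcases lt_trichotomy (k : ℕ) (j : ℕ) with h | h | h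
    · have : a k < b j := (hab k).trans ((hba' k j h).trans (hab j))
      exact sub_ne_zero_of_ne (ne_of_gt this)
    · have hkj : k = j := Fin.ext h
      exact sub_ne_zero_of_ne (ne_of_gt (hkj ▸ hab k))
    · exact sub_ne_zero_of_ne (ne_of_lt (hba' j k h))
  have hakb : ∀ k : Fin n, (k : ℕ) ≤ (j : ℕ) → a k < b j := by
    intro k h
    rcases eq_or_lt_of_le h with h | h
    · exact (Fin.ext h : k = j) ▸ hab k
    · exact (hab k).trans ((hba' k j h).trans (hab j))
  have hcne : ∀ k : Fin n, b j - c k ≠ 0 := by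
    intro k
    rcases le_or_gt (k : ℕ) (j : ℕ) with h | h
    · exact sub_ne_zero_of_ne (ne_of_gt ((hca k).trans (hakb k h)))
    · rcases eq_or_lt_of_le (Nat.succ_le_of_lt h) with h1 | h1
      · exact sub_ne_zero_of_ne (ne_of_lt (hbc j k (by omega)))
      · have hp : (k : ℕ) - 1 < n := by have := k.isLt; omega
        let p : Fin n := ⟨(k : ℕ) - 1, hp⟩
        have h2 : b j < a p := hba' j p (by simp only [p]; omega)
        have h3 : b p < c k := hbc p k (by simp only [p]; omega)
        exact sub_ne_zero_of_ne (ne_of_lt (h2.trans ((hab p).trans h3)))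
  -- the key product identity at x = b j
  have hzero : (∏ k, (b j - b k)) = 0 :=
    Finset.prod_eq_zero (Finset.mem_univ j) (sub_self _)
  have key := hid (b j)
  rw [hzero, mul_zero, hexp] at key
  have heq : ∏ k, (b j - a k) = Real.exp (-lam) * ∏ k, (b j - c k) := by
    linarith [key]
  have hprodc : (∏ k, (b j - c k)) ≠ 0 :=
    Finset.prod_ne_zero_iff.mpr fun k _ => hcne k
  have hproda : (∏ k, (b j - a k)) ≠ 0 :=
    Finset.prod_ne_zero_iff.mpr fun k _ => hane k
  have hsum : ∑ k, Real.log (|(b j - c k) / (b j - a k)|)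
      = Real.log |∏ k, (b j - c k)| - Real.log |∏ k, (b j - a k)| := by
    have h1 : ∀ k : Fin n, Real.log (|(b j - c k) / (b j - a k)|)
        = Real.log |b j - c k| - Real.log |b j - a k| := by
      intro k
      rw [abs_div, Real.log_div (abs_ne_zero.mpr (hcne k)) (abs_ne_zero.mpr (hane k))]
    rw [Finset.sum_congr rfl fun k _ => h1 k, Finset.sum_sub_distrib]
    congr 1
    · rw [Finset.abs_prod, Real.log_prod]
      intro k _; exact abs_ne_zero.mpr (hcne k)
    · rw [Finset.abs_prod, Real.log_prod]
      intro k _; exact abs_ne_zero.mpr (hane k)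
  rw [hsum, heq, abs_mul, abs_of_pos (Real.exp_pos _),
    Real.log_mul (ne_of_gt (Real.exp_pos _)) (abs_ne_zero.mpr hprodc), Real.log_exp]
  ring
end

section
/- Let G ⊂ ℝ be open with Whitney-type partition {I_k} (intervals satisfying dist(I_k, Gᶜ) = |I_k| and G = ⋃ I_k), and let F ⊂ G be a measurable set such that |F ∩ I_j| ≤ πγ|I_j|/2^{j+2} for all j, where γ > 0. Then for every x ∈ ℝ \ G, the absolute value of the Hilbert transform |H𝟙_F(x)| ≤ (1/π) ∑_j |F ∩ I_j| / dist(x, I_j) < γ. -/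
open MeasureTheory Filter Set Real

/-- Let `G ⊂ ℝ` be open with a Whitney-type partition by intervals
`I k = [p k, q k)` satisfying `G = ⋃ I k` and `dist(I k, Gᶜ) = |I k|`. If
`F ⊆ G` is measurable with `|F ∩ I j| ≤ π γ |I j| / 2^{j+2}` for all `j`
(`γ > 0`), then for every `x ∉ G`,
`|H𝟙_F(x)| ≤ (1/π) ∑ |F ∩ I j| / dist(x, I j) < γ`,
where `H𝟙_F(x) = (1/π) ∫_F dt/(x - t)`. -/
theorem stmt8 (G : Set ℝ) (hG : IsOpen G) (p q : ℕ → ℝ)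
    (hpq : ∀ k, p k < q k)
    (hGU : G = ⋃ k, Ico (p k) (q k))
    (hWhitney : ∀ k,
      sInf (Set.image2 (fun t y => |t - y|) (Ico (p k) (q k)) Gᶜ) = q k - p k)
    (F : Set ℝ) (hFG : F ⊆ G) (hFm : MeasurableSet F)
    (γ : ℝ) (hγ : 0 < γ)
    (hsmall : ∀ j, volume (F ∩ Ico (p j) (q j))
        ≤ ENNReal.ofReal (π * γ * (q j - p j) / 2 ^ (j + 2))) :
    ∀ x ∉ G,
      |(1 / π) * ∫ t in F, 1 / (x - t)|
          ≤ (1 / π) * ∑' j : ℕ,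
              (volume (F ∩ Ico (p j) (q j))).toReal
                / Metric.infDist x (Ico (p j) (q j)) ∧
      (1 / π) * ∑' j : ℕ,
          (volume (F ∩ Ico (p j) (q j))).toReal
            / Metric.infDist x (Ico (p j) (q j)) < γ := by
  intro x hx
  have hπ : (0:ℝ) < π := pi_pos
  set I : ℕ → Set ℝ := fun k => Ico (p k) (q k) with hIdef
  set d : ℕ → ℝ := fun k => Metric.infDist x (I k) with hddef
  set a : ℕ → ℝ := fun k => (volume (F ∩ I k)).toReal with hadef
  have hIne : ∀ k, (I k).Nonempty := fun k => ⟨p k, left_mem_Ico.2 (hpq k)⟩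
  -- lower bound on distance
  have hd : ∀ k, q k - p k ≤ d k := by
    intro k
    by_contra h
    push_neg at h
    obtain ⟨y, hy, hlt⟩ := (Metric.infDist_lt_iff (hIne k)).1 h
    have hmem : |y - x| ∈ Set.image2 (fun t y => |t - y|) (I k) Gᶜ :=
      Set.mem_image2_of_mem hy hx
    have hbdd : BddBelow (Set.image2 (fun t y => |t - y|) (I k) Gᶜ) := by
      refine ⟨0, ?_⟩
      rintro z ⟨t₁, _, y₁, _, rfl⟩
      exact abs_nonneg _
    have hle := csInf_le hbdd hmem
    rw [hWhitney k] at hle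
    rw [Real.dist_eq, abs_sub_comm] at hlt
    linarith
  have hdpos : ∀ k, 0 < d k := fun k => lt_of_lt_of_le (by linarith [hpq k]) (hd k)
  -- volume is finite
  have hvfin : ∀ j, volume (F ∩ I j) ≠ ⊤ :=
    fun j => ne_top_of_le_ne_top ENNReal.ofReal_ne_top (hsmall j)
  have hanneg : ∀ j, 0 ≤ a j := fun j => ENNReal.toReal_nonneg
  -- bound on a j
  have habd : ∀ j, a j ≤ π * γ * (q j - p j) / 2 ^ (j + 2) := by
    intro j
    have h2 : (0:ℝ) < 2 ^ (j + 2) := by positivity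
    have hnn : 0 ≤ π * γ * (q j - p j) / 2 ^ (j + 2) := by
      apply div_nonneg _ h2.le
      have := hpq j
      nlinarith [mul_pos (mul_pos hπ hγ) (sub_pos.2 this)]
    have := ENNReal.toReal_mono ENNReal.ofReal_ne_top (hsmall j)
    rwa [ENNReal.toReal_ofReal hnn] at this
  -- bound on terms
  have hterm : ∀ j, a j / d j ≤ π * γ / 2 ^ (j + 2) := by
    intro j
    have h1 : a j / d j ≤ a j / (q j - p j) :=
      div_le_div_of_nonneg_left (hanneg j) (by linarith [hpq j]) (hd j)
    have h2 : a j / (q j - p j) ≤ (π * γ * (q j - p j) / 2 ^ (j + 2)) / (q j - p j) :=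
      div_le_div_of_nonneg_right (habd j) (by linarith [hpq j])
    have hne : q j - p j ≠ 0 := by have := hpq j; linarith
    have h3 : (π * γ * (q j - p j) / 2 ^ (j + 2)) / (q j - p j) = π * γ / 2 ^ (j + 2) := by
      field_simp
    linarith
  have htermnn : ∀ j, 0 ≤ a j / d j := fun j => div_nonneg (hanneg j) (hdpos j).le
  -- summability
  have hgsum : Summable (fun j : ℕ => π * γ / 2 ^ (j + 2)) := by
    have : (fun j : ℕ => π * γ / 2 ^ (j + 2)) = fun j : ℕ => (π * γ / 4) * (1/2) ^ j := by
      funext j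
      rw [pow_add]
      field_simp
      rw [mul_right_comm, ← mul_pow]
      norm_num
    rw [this]
    exact summable_geometric_two.mul_left _
  have hsum : Summable (fun j => a j / d j) :=
    Summable.of_nonneg_of_le htermnn hterm hgsum
  have hgtsum : ∑' j : ℕ, π * γ / 2 ^ (j + 2) = π * γ / 2 := by
    have h1 : (fun j : ℕ => π * γ / 2 ^ (j + 2)) = fun j : ℕ => (π * γ / 4) * (1/2) ^ j := by
      funext j
      rw [pow_add]
      field_simp
      rw [mul_right_comm, ← mul_pow]
      norm_num
    rw [h1, tsum_mul_left, tsum_geometric_two]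
    ring
  have hS : ∑' j, a j / d j ≤ π * γ / 2 := by
    calc ∑' j, a j / d j ≤ ∑' j : ℕ, π * γ / 2 ^ (j + 2) := Summable.tsum_le_tsum hterm hsum hgsum
      _ = π * γ / 2 := hgtsum
  have hSnn : 0 ≤ ∑' j, a j / d j := tsum_nonneg htermnn
  constructor
  · -- main integral bound
    have hFU : F = ⋃ j, F ∩ I j := by
      ext t
      simp only [mem_iUnion, mem_inter_iff]
      constructor
      · intro ht
        have := hFG ht
        rw [hGU] at this
        obtain ⟨j, hj⟩ := mem_iUnion.1 this
        exact ⟨j, ht, hj⟩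
      · rintro ⟨j, ht, _⟩
        exact ht
    -- lintegral bound over each piece
    have hlin : ∀ j, (∫⁻ t in F ∩ I j, ENNReal.ofReal ‖(1:ℝ) / (x - t)‖)
        ≤ ENNReal.ofReal (a j / d j) := by
      intro j
      have hmono : (∫⁻ t in F ∩ I j, ENNReal.ofReal ‖(1:ℝ) / (x - t)‖)
          ≤ ∫⁻ _ in F ∩ I j, ENNReal.ofReal (1 / d j) := by
        apply setLIntegral_mono measurable_const
        intro t ht
        apply ENNReal.ofReal_le_ofReal
        have hdist : d j ≤ |x - t| := by
          have := Metric.infDist_le_dist_of_mem (x := x) ht.2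
          rwa [Real.dist_eq] at this
        rw [norm_div, norm_one, Real.norm_eq_abs]
        exact div_le_div_of_nonneg_left one_pos.le (hdpos j) hdist
      calc (∫⁻ t in F ∩ I j, ENNReal.ofReal ‖(1:ℝ) / (x - t)‖)
          ≤ ∫⁻ _ in F ∩ I j, ENNReal.ofReal (1 / d j) := hmono
        _ = ENNReal.ofReal (1 / d j) * volume (F ∩ I j) := setLIntegral_const _ _
        _ = ENNReal.ofReal (1 / d j) * ENNReal.ofReal (a j) := by
            rw [hadef]
            congr 1
            exact (ENNReal.ofReal_toReal (hvfin j)).symm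
        _ = ENNReal.ofReal (a j / d j) := by
            rw [← ENNReal.ofReal_mul (one_div_nonneg.2 (hdpos j).le)]
            congr 1
            rw [one_div, div_eq_mul_inv, mul_comm]
    have hlintot : (∫⁻ t in F, ENNReal.ofReal ‖(1:ℝ) / (x - t)‖)
        ≤ ENNReal.ofReal (∑' j, a j / d j) := by
      rw [ENNReal.ofReal_tsum_of_nonneg htermnn hsum]
      calc (∫⁻ t in F, ENNReal.ofReal ‖(1:ℝ) / (x - t)‖)
          = ∫⁻ t in ⋃ j, F ∩ I j, ENNReal.ofReal ‖(1:ℝ) / (x - t)‖ := by rw [← hFU]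
        _ ≤ ∑' j, ∫⁻ t in F ∩ I j, ENNReal.ofReal ‖(1:ℝ) / (x - t)‖ :=
            lintegral_iUnion_le _ _
        _ ≤ ∑' j, ENNReal.ofReal (a j / d j) := ENNReal.tsum_le_tsum hlin
    have hnorm : ‖∫ t in F, 1 / (x - t)‖
        ≤ (∫⁻ t in F, ENNReal.ofReal ‖(1:ℝ) / (x - t)‖).toReal :=
      norm_integral_le_lintegral_norm _
    have h2 : (∫⁻ t in F, ENNReal.ofReal ‖(1:ℝ) / (x - t)‖).toReal ≤ ∑' j, a j / d j := by
      have := ENNReal.toReal_mono ENNReal.ofReal_ne_top hlintot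
      rwa [ENNReal.toReal_ofReal hSnn] at this
    rw [abs_mul, abs_of_nonneg (by positivity : (0:ℝ) ≤ 1 / π)]
    apply mul_le_mul_of_nonneg_left _ (by positivity : (0:ℝ) ≤ 1 / π)
    rw [← Real.norm_eq_abs]
    exact le_trans hnorm h2
  · -- strict bound
    calc (1 / π) * ∑' j, a j / d j ≤ (1 / π) * (π * γ / 2) :=
        mul_le_mul_of_nonneg_left hS (by positivity)
      _ = γ / 2 := by field_simp
      _ < γ := by linarith
end

section
/- Let φ be the continuous function supported on [-1,1] with φ(x) = 1 - x on [0,1], φ(-2^{-k}) = 1 - 1/(k+1), linear on each [-2^{-k}, -2^{-k-1}], and zero outside [-1,1]. Then the maximal Hilbert transform of φ at 0 is infinite: sup_{ε>0} |(1/π) ∫_{|t|>ε} φ(t)/(-t) dt| = ∞. In particular, for ε = 2^{-n}, the truncated Hilbert transform H_{2^{-n}} φ(0) ≤ -(log 2) ∑_{k=1}^n 1/(k+1) + 1, which tends to -∞. -/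
open MeasureTheory Filter Set Real

/-- The function `φ`: `φ(x) = 1 - x` on `[0,1]`, `φ = 0` outside `[-1,1]`,
`φ(-2^{-k}) = 1 - 1/(k+1)` and `φ` linear on each `[-2^{-k}, -2^{-k-1}]`. -/
noncomputable def phi (x : ℝ) : ℝ :=
  if x < -1 ∨ 1 < x then 0
  else if 0 ≤ x then 1 - x
  else
    let k : ℕ := ⌊-Real.logb 2 (-x)⌋₊
    (1 - 1 / ((k : ℝ) + 1)) +
      (x + 2 ^ (-(k : ℝ))) * 2 ^ ((k : ℝ) + 1) *
        ((1 - 1 / ((k : ℝ) + 2)) - (1 - 1 / ((k : ℝ) + 1)))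

noncomputable def cc (k : ℕ) : ℝ := (2:ℝ) ^ (-(k:ℝ))

lemma cc_pos (k : ℕ) : 0 < cc k := Real.rpow_pos_of_pos two_pos _
lemma cc_le_one (k : ℕ) : cc k ≤ 1 :=
  Real.rpow_le_one_of_one_le_of_nonpos one_le_two (neg_nonpos.mpr (Nat.cast_nonneg k))
lemma cc_succ (k : ℕ) : cc (k+1) = cc k / 2 := by
  unfold cc
  rw [div_eq_mul_inv, ← Real.rpow_neg_one 2, ← Real.rpow_add two_pos]
  push_cast; ring_nf

lemma meas_rpow2 {g : ℝ → ℝ} (hg : Measurable g) : Measurable fun x => (2:ℝ) ^ g x := by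
  have : (fun x => (2:ℝ) ^ g x) = fun x => Real.exp (Real.log 2 * g x) := by
    funext x; rw [Real.rpow_def_of_pos two_pos]
  rw [this]; exact Real.measurable_exp.comp (measurable_const.mul hg)

lemma phi_measurable : Measurable phi := by
  unfold phi
  apply Measurable.ite (measurableSet_lt measurable_id measurable_const |>.union
    (measurableSet_lt measurable_const measurable_id)) measurable_const
  apply Measurable.ite (measurableSet_le measurable_const measurable_id)
    (measurable_const.sub measurable_id)
  have hlb : Measurable fun x : ℝ => -Real.logb 2 (-x) := by
    have : Measurable fun x : ℝ => Real.log (-x) / Real.log 2 :=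
      (Real.measurable_log.comp measurable_neg).div_const _
    show Measurable fun x : ℝ => -(Real.log (-x) / Real.log 2)
    exact this.neg
  have hk : Measurable fun x : ℝ => (⌊-Real.logb 2 (-x)⌋₊ : ℝ) :=
    measurable_from_top.comp (Measurable.nat_floor hlb)
  simp only
  exact ((measurable_const.sub (measurable_const.div (hk.add measurable_const))).add
    (((measurable_id.add (meas_rpow2 hk.neg)).mul (meas_rpow2 (hk.add measurable_const))).mul
      ((measurable_const.sub (measurable_const.div (hk.add measurable_const))).sub
        (measurable_const.sub (measurable_const.div (hk.add measurable_const))))))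

lemma floor_bracket {t : ℝ} (h1 : -1 ≤ t) (h0 : t < 0) :
    cc (⌊-Real.logb 2 (-t)⌋₊ + 1) < -t ∧ -t ≤ cc ⌊-Real.logb 2 (-t)⌋₊ := by
  set a := -Real.logb 2 (-t) with ha
  have hpos : 0 < -t := by linarith
  have hle1 : -t ≤ 1 := by linarith
  have hanneg : 0 ≤ a := by
    rw [ha, neg_nonneg]
    exact Real.logb_nonpos one_lt_two hpos.le hle1
  have hfl : (⌊a⌋₊ : ℝ) ≤ a := Nat.floor_le hanneg
  have hfl2 : a < ⌊a⌋₊ + 1 := Nat.lt_floor_add_one a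
  constructor
  · have : -((⌊a⌋₊:ℝ) + 1) < Real.logb 2 (-t) := by rw [ha] at hfl2; linarith
    calc cc (⌊a⌋₊ + 1) = (2:ℝ) ^ (-(((⌊a⌋₊:ℕ)+1:ℕ):ℝ)) := rfl
    _ < (2:ℝ) ^ Real.logb 2 (-t) := by
        apply Real.rpow_lt_rpow_left_iff one_lt_two |>.mpr
        push_cast; linarith
    _ = -t := Real.rpow_logb two_pos (by norm_num) hpos
  · have : Real.logb 2 (-t) ≤ -(⌊a⌋₊:ℝ) := by rw [ha] at hfl; linarith
    calc -t = (2:ℝ) ^ Real.logb 2 (-t) := (Real.rpow_logb two_pos (by norm_num) hpos).symm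
    _ ≤ cc ⌊a⌋₊ := Real.rpow_le_rpow_left_iff one_lt_two |>.mpr this

lemma phi_neg_bounds {t : ℝ} (h1 : -1 ≤ t) (h0 : t < 0) :
    1 - 1/((⌊-Real.logb 2 (-t)⌋₊:ℝ) + 1) ≤ phi t ∧
      phi t ≤ 1 - 1/((⌊-Real.logb 2 (-t)⌋₊:ℝ) + 2) := by
  obtain ⟨hlt, hle⟩ := floor_bracket h1 h0
  set k := ⌊-Real.logb 2 (-t)⌋₊ with hk
  have hphi : phi t = (1 - 1 / ((k : ℝ) + 1)) +
      (t + 2 ^ (-(k : ℝ))) * 2 ^ ((k : ℝ) + 1) *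
        ((1 - 1 / ((k : ℝ) + 2)) - (1 - 1 / ((k : ℝ) + 1))) := by
    unfold phi
    rw [if_neg (by push_neg; constructor <;> linarith), if_neg (by linarith)]
  have h2k : (2:ℝ) ^ (-(k:ℝ)) = cc k := rfl
  have hnn : 0 ≤ t + 2 ^ (-(k:ℝ)) := by rw [h2k]; linarith
  have hub : (t + 2 ^ (-(k:ℝ))) * 2 ^ ((k:ℝ) + 1) ≤ 1 := by
    have h2 : (2:ℝ) ^ ((k:ℝ)+1) = (cc (k+1))⁻¹ := by
      unfold cc
      rw [← Real.rpow_neg two_pos.le]; push_cast; ring_nf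
    have hc2 : cc k = 2 * cc (k+1) := by rw [cc_succ]; ring
    have : t + 2 ^ (-(k:ℝ)) ≤ cc (k+1) := by rw [h2k, hc2]; linarith
    rw [h2]
    calc (t + 2 ^ (-(k:ℝ))) * (cc (k+1))⁻¹ ≤ cc (k+1) * (cc (k+1))⁻¹ := by
          apply mul_le_mul_of_nonneg_right this (inv_nonneg.mpr (cc_pos _).le)
    _ = 1 := mul_inv_cancel₀ (cc_pos _).ne'
  have hfrac : (0:ℝ) ≤ (1 - 1 / ((k : ℝ) + 2)) - (1 - 1 / ((k : ℝ) + 1)) := by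
    have : (1:ℝ) / ((k:ℝ)+2) ≤ 1 / ((k:ℝ)+1) := by
      apply one_div_le_one_div_of_le (by positivity) (by linarith)
    linarith
  have hpow_nn : (0:ℝ) ≤ (2:ℝ) ^ ((k:ℝ)+1) := (Real.rpow_pos_of_pos two_pos _).le
  constructor
  · rw [hphi]; nlinarith [mul_nonneg (mul_nonneg hnn hpow_nn) hfrac]
  · rw [hphi]
    nlinarith [mul_le_of_le_one_left hfrac hub]

lemma phi_nonneg (t : ℝ) : 0 ≤ phi t := by
  rcases lt_or_ge t (-1) with h | h1
  · unfold phi; rw [if_pos (Or.inl h)]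
  rcases lt_or_ge (1:ℝ) t with h | h2
  · unfold phi; rw [if_pos (Or.inr h)]
  rcases le_or_gt 0 t with h0 | h0
  · unfold phi; rw [if_neg (by push_neg; constructor <;> linarith), if_pos h0]; linarith
  · have := (phi_neg_bounds h1 h0).1
    have hk : (0:ℝ) < (⌊-Real.logb 2 (-t)⌋₊:ℝ) + 1 := by positivity
    have : 1/((⌊-Real.logb 2 (-t)⌋₊:ℝ) + 1) ≤ 1 := by
      rw [div_le_one hk]; linarith [Nat.cast_nonneg (α := ℝ) ⌊-Real.logb 2 (-t)⌋₊]
    linarith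

lemma phi_le_one (t : ℝ) : phi t ≤ 1 := by
  rcases lt_or_ge t (-1) with h | h1
  · unfold phi; rw [if_pos (Or.inl h)]; norm_num
  rcases lt_or_ge (1:ℝ) t with h | h2
  · unfold phi; rw [if_pos (Or.inr h)]; norm_num
  rcases le_or_gt 0 t with h0 | h0
  · unfold phi; rw [if_neg (by push_neg; constructor <;> linarith), if_pos h0]; linarith
  · have := (phi_neg_bounds h1 h0).2
    have hk : (0:ℝ) < (⌊-Real.logb 2 (-t)⌋₊:ℝ) + 2 := by positivity
    have : 0 < 1/((⌊-Real.logb 2 (-t)⌋₊:ℝ) + 2) := by positivity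
    linarith

lemma phi_eq_zero_of_abs_gt {t : ℝ} (h : 1 < |t|) : phi t = 0 := by
  unfold phi
  rcases lt_abs.mp h with h | h
  · rw [if_pos (Or.inr h)]
  · rw [if_pos (Or.inl (by linarith))]

lemma phi_le_on_interval {k : ℕ} {t : ℝ} (ht : t ∈ Ico (-(cc k)) (-(cc (k+1)))) :
    phi t ≤ 1 - 1/((k:ℝ) + 2) := by
  obtain ⟨hl, hr⟩ := ht
  have h1 : -1 ≤ t := by linarith [cc_le_one k]
  have h0 : t < 0 := by linarith [cc_pos (k+1)]
  have hfl : ⌊-Real.logb 2 (-t)⌋₊ = k := by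
    have hpos : 0 < -t := by linarith
    have hub : -t ≤ cc k := by linarith
    have hlb : cc (k+1) < -t := by linarith
    have e1 : Real.logb 2 (-t) ≤ -(k:ℝ) := by
      have := Real.logb_le_logb_of_le (b := 2) one_lt_two hpos hub
      rwa [show cc k = (2:ℝ)^(-(k:ℝ)) from rfl,
        Real.logb_rpow two_pos (by norm_num)] at this
    have e2 : -((k:ℝ)+1) < Real.logb 2 (-t) := by
      have := Real.logb_lt_logb (b := 2) one_lt_two (cc_pos (k+1)) hlb
      rw [show cc (k+1) = (2:ℝ)^(-(((k:ℕ)+1:ℕ):ℝ)) from rfl,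
        Real.logb_rpow two_pos (by norm_num)] at this
      push_cast at this
      linarith
    rw [Nat.floor_eq_iff (by linarith [e1])]
    refine ⟨by linarith, ?_⟩
    push_cast
    linarith
  have := (phi_neg_bounds h1 h0).2
  rwa [hfl] at this

lemma f_measurable : Measurable (fun t : ℝ => phi t / (0 - t)) :=
  phi_measurable.div (measurable_const.sub measurable_id)

lemma integrableOn_f {s : Set ℝ} {δ : ℝ} (hδ : 0 < δ) (hs : MeasurableSet s)
    (hsub : ∀ t ∈ s, δ ≤ |t|) :
    IntegrableOn (fun t : ℝ => phi t / (0 - t)) s := by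
  set f := fun t : ℝ => phi t / (0 - t) with hf
  have hmf : Measurable f := f_measurable
  have hsplit : s = (s ∩ Icc (-1) 1) ∪ (s \ Icc (-1) 1) := (Set.inter_union_diff s _).symm
  rw [hsplit]
  apply MeasureTheory.IntegrableOn.union
  · apply Measure.integrableOn_of_bounded (M := 1/δ)
    · exact ne_top_of_le_ne_top (by simp) (measure_mono (inter_subset_right))
    · exact hmf.aestronglyMeasurable
    · rw [ae_restrict_iff' (hs.inter measurableSet_Icc)]
      apply ae_of_all
      intro t ht
      have habs : δ ≤ |t| := hsub t ht.1
      have ht0 : |t| ≠ 0 := (lt_of_lt_of_le hδ habs).ne'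
      have : ‖f t‖ = |phi t| / |t| := by
        rw [hf]; simp only [Real.norm_eq_abs, abs_div, zero_sub, abs_neg]
      rw [this]
      apply div_le_div₀ (by positivity) _ hδ habs
      rw [abs_le]
      exact ⟨by linarith [phi_nonneg t], phi_le_one t⟩
  · have : EqOn f (fun _ => (0:ℝ)) (s \ Icc (-1) 1) := by
      intro t ht
      have : 1 < |t| := by
        have h2 := ht.2
        rw [Set.mem_Icc, not_and_or] at h2
        rcases h2 with h | h
        · push_neg at h; rw [abs_of_neg (by linarith)]; linarith
        · push_neg at h; rw [abs_of_pos (by linarith)]; linarith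
      simp [hf, phi_eq_zero_of_abs_gt this]
    rw [MeasureTheory.integrableOn_congr_fun this (hs.diff measurableSet_Icc)]
    exact integrableOn_zero

lemma pos_part (n : ℕ) :
    ∫ t in Ioc (cc n) 1, phi t / (0 - t) = (1 - cc n) + Real.log (cc n) := by
  rw [← intervalIntegral.integral_of_le (cc_le_one n)]
  have hEq : EqOn (fun t : ℝ => phi t / (0 - t)) (fun t : ℝ => 1 - 1/t)
      (Set.uIcc (cc n) 1) := by
    intro t ht
    rw [Set.uIcc_of_le (cc_le_one n), Set.mem_Icc] at ht
    have ht0 : 0 < t := lt_of_lt_of_le (cc_pos n) ht.1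
    have hphi : phi t = 1 - t := by
      unfold phi
      rw [if_neg (by push_neg; constructor <;> linarith), if_pos ht0.le]
    simp only [hphi]
    rw [zero_sub, div_neg, sub_div, div_self ht0.ne', one_div]
    ring
  rw [intervalIntegral.integral_congr hEq]
  have h0 : (0:ℝ) ∉ Set.uIcc (cc n) 1 := by
    rw [Set.uIcc_of_le (cc_le_one n), Set.mem_Icc]
    push_neg
    intro h; exact absurd h (not_le.mpr (cc_pos n))
  have h1 : IntervalIntegrable (fun x : ℝ => 1/x) volume (cc n) 1 :=
    intervalIntegral.intervalIntegrable_one_div (f := fun x => x)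
      (fun x hx h => h0 (h ▸ hx)) continuousOn_id
  rw [intervalIntegral.integral_sub intervalIntegrable_const h1]
  rw [integral_one_div h0]
  simp only [intervalIntegral.integral_const, smul_eq_mul, mul_one]
  rw [Real.log_div one_ne_zero (cc_pos n).ne', Real.log_one]
  ring

lemma neg_piece (k : ℕ) :
    ∫ t in Ico (-(cc k)) (-(cc (k+1))), phi t / (0 - t)
      ≤ (1 - 1/((k:ℝ)+2)) * Real.log 2 := by
  set a := -(cc k) with ha
  set b := -(cc (k+1)) with hb
  have hab : a < b := by
    rw [ha, hb, neg_lt_neg_iff, cc_succ]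
    linarith [cc_pos k]
  have hb0 : b < 0 := by rw [hb]; linarith [cc_pos (k+1)]
  set c := 1 - 1/((k:ℝ)+2) with hc
  have hc0 : 0 ≤ c := by
    rw [hc]
    have : (1:ℝ)/((k:ℝ)+2) ≤ 1 := by
      rw [div_le_one (by positivity)]
      linarith [Nat.cast_nonneg (α := ℝ) k]
    linarith
  have hg_cont : ContinuousOn (fun t : ℝ => c / (0 - t)) (Icc a b) := by
    apply continuousOn_const.div (continuousOn_const.sub continuousOn_id)
    intro x hx
    rw [Set.mem_Icc] at hx
    have : x < 0 := lt_of_le_of_lt hx.2 hb0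
    simp only [Pi.sub_apply, zero_sub, ne_eq, neg_eq_zero, id_eq]
    exact this.ne
  have hg_int : IntegrableOn (fun t : ℝ => c / (0 - t)) (Ico a b) :=
    (hg_cont.integrableOn_Icc).mono_set Ico_subset_Icc_self
  have hf_int : IntegrableOn (fun t : ℝ => phi t / (0 - t)) (Ico a b) := by
    apply integrableOn_f (cc_pos (k+1)) measurableSet_Ico
    intro t ht
    rw [Set.mem_Ico] at ht
    rw [abs_of_neg (lt_trans ht.2 hb0)]
    rw [hb] at ht
    linarith [ht.2]
  have hmono : ∫ t in Ico a b, phi t / (0 - t) ≤ ∫ t in Ico a b, c / (0 - t) := by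
    apply setIntegral_mono_on hf_int hg_int measurableSet_Ico
    intro t ht
    have ht0 : 0 < 0 - t := by
      rw [Set.mem_Ico] at ht
      have : t < 0 := lt_of_lt_of_le ht.2 hb0.le
      linarith
    exact (div_le_div_iff_of_pos_right ht0).mpr (phi_le_on_interval ht)
  have h0ab : (0:ℝ) ∉ Set.uIcc a b := by
    rw [Set.uIcc_of_le hab.le, Set.mem_Icc]
    exact fun h => absurd h.2 (not_le.mpr hb0)
  have hval : ∫ t in Ico a b, c / (0 - t) = c * Real.log 2 := by
    rw [MeasureTheory.integral_Ico_eq_integral_Ioo,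
      ← MeasureTheory.integral_Ioc_eq_integral_Ioo,
      ← intervalIntegral.integral_of_le hab.le]
    have heq : (fun t : ℝ => c / (0 - t)) = fun t => -(c * (1/t)) := by
      funext t
      rw [zero_sub, div_neg, one_div, div_eq_mul_inv]
    rw [heq, intervalIntegral.integral_neg, intervalIntegral.integral_const_mul,
      integral_one_div h0ab]
    have hba : b / a = 1/2 := by
      rw [hb, ha, cc_succ]
      rw [neg_div_neg_eq, div_div, div_eq_div_iff (mul_pos two_pos (cc_pos k)).ne' two_ne_zero]
      ring
    rw [hba, Real.log_div one_ne_zero two_ne_zero, Real.log_one]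
    ring
  linarith [hmono, hval.le, hval.ge]

lemma cc_antitone {m n : ℕ} (h : m ≤ n) : cc n ≤ cc m := by
  unfold cc
  apply Real.rpow_le_rpow_of_exponent_le one_le_two
  simp only [neg_le_neg_iff, Nat.cast_le]
  exact h

lemma neg_sum (n : ℕ) :
    ∫ t in Ico (-1 : ℝ) (-(cc n)), phi t / (0 - t)
      ≤ Real.log 2 * ∑ k ∈ Finset.range n, (1 - 1/((k:ℝ)+2)) := by
  induction n with
  | zero =>
    have : cc 0 = 1 := by unfold cc; norm_num
    simp [this]
  | succ n ih =>
    have h1 : (-1 : ℝ) ≤ -(cc n) := by linarith [cc_le_one n]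
    have h2 : -(cc n) ≤ -(cc (n+1)) := by
      simp only [neg_le_neg_iff]; exact cc_antitone (Nat.le_succ n)
    have hsplit : Ico (-1 : ℝ) (-(cc (n+1))) =
        Ico (-1 : ℝ) (-(cc n)) ∪ Ico (-(cc n)) (-(cc (n+1))) :=
      (Set.Ico_union_Ico_eq_Ico h1 h2).symm
    have hint1 : IntegrableOn (fun t : ℝ => phi t / (0 - t)) (Ico (-1:ℝ) (-(cc n))) := by
      apply integrableOn_f (cc_pos n) measurableSet_Ico
      intro t ht
      rw [Set.mem_Ico] at ht
      rw [abs_of_neg (by linarith [cc_pos n])]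
      linarith
    have hint2 : IntegrableOn (fun t : ℝ => phi t / (0 - t)) (Ico (-(cc n)) (-(cc (n+1)))) := by
      apply integrableOn_f (cc_pos (n+1)) measurableSet_Ico
      intro t ht
      rw [Set.mem_Ico] at ht
      rw [abs_of_neg (by linarith [cc_pos (n+1)])]
      linarith
    rw [hsplit, setIntegral_union (Set.Ico_disjoint_Ico_same)
      measurableSet_Ico hint1 hint2]
    rw [Finset.sum_range_succ, mul_add]
    have := neg_piece n
    have hcomm : Real.log 2 * (1 - 1/((n:ℝ)+2)) = (1 - 1/((n:ℝ)+2)) * Real.log 2 := mul_comm _ _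
    linarith

lemma sum_reindex (n : ℕ) :
    ∑ k ∈ Finset.Icc 1 n, (1:ℝ)/((k:ℝ)+1) = ∑ k ∈ Finset.range n, 1/((k:ℝ)+2) := by
  induction n with
  | zero => simp
  | succ m ihm =>
    rw [Finset.sum_Icc_succ_top (Nat.one_le_iff_ne_zero.mpr (Nat.succ_ne_zero m)),
      Finset.sum_range_succ, ihm]
    push_cast
    norm_num
    ring

lemma main_bound (n : ℕ) :
    ∫ t in {t : ℝ | cc n < |t|}, phi t / (0 - t)
      ≤ -(Real.log 2) * ∑ k ∈ Finset.Icc 1 n, (1 : ℝ) / (k + 1) + 1 := by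
  set f := fun t : ℝ => phi t / (0 - t) with hf
  have hSmeas : MeasurableSet {t : ℝ | cc n < |t|} :=
    measurableSet_lt measurable_const continuous_abs.measurable
  have hind : ∀ t, f t = (Icc (-1:ℝ) 1).indicator f t := by
    intro t
    by_cases h : t ∈ Icc (-1:ℝ) 1
    · rw [Set.indicator_of_mem h]
    · rw [Set.indicator_of_notMem h]
      have : 1 < |t| := by
        rw [Set.mem_Icc, not_and_or] at h
        rcases h with h | h
        · push_neg at h; rw [abs_of_neg (by linarith)]; linarith
        · push_neg at h; rw [abs_of_pos (by linarith)]; linarith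
      simp [hf, phi_eq_zero_of_abs_gt this]
  have step1 : ∫ t in {t : ℝ | cc n < |t|}, f t
      = ∫ t in {t : ℝ | cc n < |t|} ∩ Icc (-1:ℝ) 1, f t := by
    rw [← MeasureTheory.setIntegral_indicator measurableSet_Icc]
    exact setIntegral_congr_fun hSmeas (fun t _ => hind t)
  have step2 : {t : ℝ | cc n < |t|} ∩ Icc (-1:ℝ) 1
      = Ico (-1:ℝ) (-(cc n)) ∪ Ioc (cc n) 1 := by
    ext t
    simp only [Set.mem_inter_iff, Set.mem_setOf_eq, Set.mem_Icc, Set.mem_union,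
      Set.mem_Ico, Set.mem_Ioc, lt_abs]
    constructor
    · rintro ⟨(h | h), h1, h2⟩
      · right; exact ⟨h, h2⟩
      · left; exact ⟨h1, by linarith⟩
    · rintro (⟨h1, h2⟩ | ⟨h1, h2⟩)
      · exact ⟨Or.inr (by linarith), h1, by linarith [cc_pos n]⟩
      · exact ⟨Or.inl h1, by linarith [cc_pos n], h2⟩
  have hdisj : Disjoint (Ico (-1:ℝ) (-(cc n))) (Ioc (cc n) 1) := by
    rw [Set.disjoint_left]
    intro t ht hts
    rw [Set.mem_Ico] at ht
    rw [Set.mem_Ioc] at hts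
    linarith [cc_pos n, ht.2, hts.1]
  have hint1 : IntegrableOn f (Ico (-1:ℝ) (-(cc n))) := by
    apply integrableOn_f (cc_pos n) measurableSet_Ico
    intro t ht
    rw [Set.mem_Ico] at ht
    rw [abs_of_neg (by linarith [cc_pos n])]
    linarith
  have hint2 : IntegrableOn f (Ioc (cc n) 1) := by
    apply integrableOn_f (cc_pos n) measurableSet_Ioc
    intro t ht
    rw [Set.mem_Ioc] at ht
    rw [abs_of_pos (by linarith [cc_pos n])]
    linarith [ht.1]
  have step3 : ∫ t in {t : ℝ | cc n < |t|}, f t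
      = (∫ t in Ico (-1:ℝ) (-(cc n)), f t) + ∫ t in Ioc (cc n) 1, f t := by
    rw [step1, step2, setIntegral_union hdisj measurableSet_Ioc hint1 hint2]
  rw [step3]
  have hneg := neg_sum n
  have hpos := pos_part n
  have hlog : Real.log (cc n) = -(n:ℝ) * Real.log 2 := by
    unfold cc
    rw [Real.log_rpow two_pos]
  have hsum1 : ∑ k ∈ Finset.range n, (1 - 1/((k:ℝ)+2))
      = (n:ℝ) - ∑ k ∈ Finset.range n, 1/((k:ℝ)+2) := by
    rw [Finset.sum_sub_distrib, Finset.sum_const, Finset.card_range]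
    simp
  rw [sum_reindex]
  have hccn := cc_pos n
  calc (∫ t in Ico (-1:ℝ) (-(cc n)), f t) + ∫ t in Ioc (cc n) 1, f t
      ≤ Real.log 2 * ((n:ℝ) - ∑ k ∈ Finset.range n, 1/((k:ℝ)+2))
        + ((1 - cc n) + (-(n:ℝ) * Real.log 2)) := by
        rw [← hsum1, ← hlog]
        linarith
    _ = -(Real.log 2) * ∑ k ∈ Finset.range n, 1/((k:ℝ)+2) + 1 - cc n := by ring
    _ ≤ -(Real.log 2) * ∑ k ∈ Finset.range n, 1/((k:ℝ)+2) + 1 := by linarith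

lemma H_eq (n : ℕ) : ∑ k ∈ Finset.Icc 1 n, (1:ℝ)/((k:ℝ)+1)
    = (∑ i ∈ Finset.range (n+1), (1:ℝ)/((i:ℝ)+1)) - 1 := by
  induction n with
  | zero => simp
  | succ m ih =>
    rw [Finset.sum_Icc_succ_top (Nat.one_le_iff_ne_zero.mpr (Nat.succ_ne_zero m)), ih,
      Finset.sum_range_succ _ (m+1)]
    push_cast
    ring

lemma H_tendsto : Tendsto (fun n : ℕ => ∑ k ∈ Finset.Icc 1 n, (1:ℝ)/((k:ℝ)+1)) atTop atTop := by
  have h1 : Tendsto (fun n : ℕ => ∑ i ∈ Finset.range (n+1), (1:ℝ)/((i:ℝ)+1)) atTop atTop :=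
    tendsto_sum_range_one_div_nat_succ_atTop.comp (tendsto_add_atTop_nat 1)
  have h2 := tendsto_atTop_add_const_right atTop (-1 : ℝ) h1
  refine h2.congr fun n => ?_
  rw [H_eq]
  ring

lemma bound_tendsto :
    Tendsto (fun n : ℕ => -(Real.log 2) * ∑ k ∈ Finset.Icc 1 n, (1:ℝ)/((k:ℝ)+1) + 1)
      atTop atBot := by
  apply tendsto_atBot_add_const_right
  have h := H_tendsto.const_mul_atTop (Real.log_pos one_lt_two)
  have := tendsto_neg_atTop_atBot.comp h
  refine this.congr fun n => ?_
  simp only [Function.comp_apply]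
  ring

/-- The maximal Hilbert transform of `φ` at `0` is infinite;
in particular the truncated transform at `ε = 2^{-n}` satisfies
`∫_{|t|>2^{-n}} φ(t)/(0-t) dt ≤ -(log 2) ∑_{k=1}^n 1/(k+1) + 1`, a bound
tending to `-∞`. -/
theorem stmt12 :
    (⨆ (ε : ℝ) (_ : 0 < ε),
        ENNReal.ofReal
          |(1 / π) * ∫ t in {t : ℝ | ε < |t|}, phi t / (0 - t)| ) = ⊤ ∧
    (∀ n : ℕ,
      (∫ t in {t : ℝ | (2 : ℝ) ^ (-(n : ℝ)) < |t|}, phi t / (0 - t))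
        ≤ -(Real.log 2) * ∑ k ∈ Finset.Icc 1 n, (1 : ℝ) / (k + 1) + 1) ∧
    Tendsto (fun n : ℕ =>
        ∫ t in {t : ℝ | (2 : ℝ) ^ (-(n : ℝ)) < |t|}, phi t / (0 - t))
      atTop atBot := by
  have part2 : ∀ n : ℕ,
      (∫ t in {t : ℝ | (2 : ℝ) ^ (-(n : ℝ)) < |t|}, phi t / (0 - t))
        ≤ -(Real.log 2) * ∑ k ∈ Finset.Icc 1 n, (1 : ℝ) / (k + 1) + 1 :=
    fun n => main_bound n
  have part3 : Tendsto (fun n : ℕ =>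
      ∫ t in {t : ℝ | (2 : ℝ) ^ (-(n : ℝ)) < |t|}, phi t / (0 - t)) atTop atBot :=
    tendsto_atBot_mono part2 bound_tendsto
  refine ⟨?_, part2, part3⟩
  rw [iSup_eq_top]
  intro b hb
  obtain ⟨n, hn⟩ :=
    (part3.eventually (eventually_lt_atBot (-(π * (b.toReal + 1))))).exists
  refine ⟨cc n, ?_⟩
  rw [iSup_pos (cc_pos n)]
  have hn' : (∫ t in {t : ℝ | cc n < |t|}, phi t / (0 - t))
      < -(π * (b.toReal + 1)) := hn
  set I := ∫ t in {t : ℝ | cc n < |t|}, phi t / (0 - t) with hI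
  have hle : (1/π) * I ≤ -(b.toReal + 1) := by
    rw [one_div, inv_mul_eq_div, div_le_iff₀ pi_pos]
    nlinarith [hn']
  have habs : b.toReal + 1 ≤ |(1/π) * I| := le_abs.mpr (Or.inr (by linarith))
  calc b = ENNReal.ofReal b.toReal := (ENNReal.ofReal_toReal hb.ne).symm
  _ < ENNReal.ofReal (b.toReal + 1) := by
      rw [ENNReal.ofReal_lt_ofReal_iff (by positivity)]
      linarith
  _ ≤ ENNReal.ofReal |(1/π) * I| := ENNReal.ofReal_le_ofReal habs
end

section
/- Let E ⊂ [-π, π] be a finite union of intervals and F ⊂ [-π, π] a set with dist(E, F) > 0. Then lim_{m→∞} ∫_{-π}^{π} 𝟙_E(t) · cos(mt) · sign(sin mt)/(x - t) dt = 0, uniformly for x ∈ F. -/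
open MeasureTheory Filter Set Real



lemma measurable_realSign : Measurable Real.sign := by
  unfold Real.sign
  exact Measurable.ite measurableSet_Iio measurable_const
    (Measurable.ite measurableSet_Ioi measurable_const measurable_const)

lemma countable_sinzero {m : ℝ} (hm : m ≠ 0) :
    Set.Countable {t : ℝ | Real.sin (m * t) = 0} := by
  apply Set.Countable.mono _ (Set.countable_range (fun k : ℤ => (k : ℝ) * π / m))
  intro t ht
  obtain ⟨k, hk⟩ := Real.sin_eq_zero_iff.mp ht
  exact ⟨k, by field_simp [hk]; exact hk⟩

lemma hasDerivAt_quot {m x t : ℝ} (hm : m ≠ 0) (hxt : x - t ≠ 0)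
    {F : ℝ → ℝ} {F' : ℝ} (hF : HasDerivAt F F' t) :
    HasDerivAt (fun u => F u / (m * (x - u)))
      ((F' * (m * (x - t)) - F t * (-m)) / (m * (x - t))^2) t := by
  have hden : HasDerivAt (fun u => m * (x - u)) (-m) t := by
    simpa using ((hasDerivAt_const t x).sub (hasDerivAt_id t)).const_mul m
  exact hF.div hden (mul_ne_zero hm hxt)

lemma hasDerivWithin_zero_aux {m x t s : ℝ} (hm : 0 < m) (hxt : x - t ≠ 0)
    (h0 : Real.sin (m * t) = 0) (hs : s * Real.cos (m * t) = |Real.cos (m * t)|)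
    (habs : ∀ u ∈ Ioo t (t + π / m), |Real.sin (m * u)| = s * Real.sin (m * u)) :
    HasDerivWithinAt (fun u => |Real.sin (m * u)| / (m * (x - u)))
      (|Real.cos (m * t)| / (x - t)) (Ioi t) t := by
  have hsin : HasDerivAt (fun u => s * Real.sin (m * u)) (s * (Real.cos (m * t) * m)) t := by
    simpa [mul_comm] using
      (((Real.hasDerivAt_sin (m * t)).comp t ((hasDerivAt_id t).const_mul m)).const_mul s)
  have hq := hasDerivAt_quot (ne_of_gt hm) hxt hsin
  have hval : (s * (Real.cos (m * t) * m) * (m * (x - t)) - s * Real.sin (m * t) * (-m))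
      / (m * (x - t))^2 = |Real.cos (m * t)| / (x - t) := by
    rw [h0, ← hs]; field_simp; ring
  rw [hval] at hq
  refine (hq.hasDerivWithinAt).congr_of_eventuallyEq ?_ ?_
  · have hlt : t < t + π / m := by
      have h := Real.pi_pos
      have h2 : 0 < π / m := by positivity
      linarith
    have hmem : Ioo t (t + π / m) ∈ nhdsWithin t (Ioi t) :=
      Ioo_mem_nhdsGT_of_mem ⟨le_refl t, hlt⟩
    filter_upwards [hmem] with u hu
    rw [habs u hu]
  · simp [h0]

lemma hasDerivWithin_zero {m x t : ℝ} (hm : 0 < m) (hxt : x - t ≠ 0)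
    (h0 : Real.sin (m * t) = 0) :
    HasDerivWithinAt (fun u => |Real.sin (m * u)| / (m * (x - u)))
      (|Real.cos (m * t)| / (x - t)) (Ioi t) t := by
  have hkey : ∀ u ∈ Ioo t (t + π / m), Real.sin (m * u)
      = Real.cos (m * t) * Real.sin (m * (u - t)) ∧ 0 < Real.sin (m * (u - t)) := by
    intro u hu
    have h1 : 0 < m * (u - t) := by have := hu.1; nlinarith
    have h2 : m * (u - t) < π := by
      have h3 : u - t < π / m := by have := hu.2; linarith
      calc m * (u - t) < m * (π / m) := mul_lt_mul_of_pos_left h3 hm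
        _ = π := by field_simp
    refine ⟨?_, Real.sin_pos_of_pos_of_lt_pi h1 h2⟩
    have hrw : m * u = m * t + m * (u - t) := by ring
    rw [hrw, Real.sin_add, h0]; ring
  rcases Real.sin_eq_zero_iff_cos_eq.mp h0 with hc | hc
  · apply hasDerivWithin_zero_aux (s := 1) hm hxt h0 (by rw [hc]; norm_num)
    intro u hu
    obtain ⟨he, hp⟩ := hkey u hu
    rw [he, hc, one_mul, one_mul, abs_of_pos hp]
  · apply hasDerivWithin_zero_aux (s := -1) hm hxt h0 (by rw [hc]; norm_num)
    intro u hu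
    obtain ⟨he, hp⟩ := hkey u hu
    rw [he, hc]
    rw [abs_of_neg (by nlinarith)]; ring

-- at sin(mt) ≠ 0
lemma hasDerivWithin_ne {m x t : ℝ} (hm : 0 < m) (hxt : x - t ≠ 0)
    (h : Real.sin (m * t) ≠ 0) :
    HasDerivAt (fun u => |Real.sin (m * u)| / (m * (x - u)))
      (Real.cos (m * t) * Real.sign (Real.sin (m * t)) / (x - t)
        + |Real.sin (m * t)| / (m * (x - t)^2)) t := by
  have habs : HasDerivAt (fun u => |Real.sin (m * u)|)
      (Real.sign (Real.sin (m * t)) * (Real.cos (m * t) * m)) t := by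
    have hs : HasDerivAt (fun u => Real.sin (m * u)) (Real.cos (m * t) * m) t := by
      exact ((Real.hasDerivAt_sin (m * t)).comp t ((hasDerivAt_id' t).const_mul m)).congr_deriv (by ring)
    rcases h.lt_or_gt with hneg | hpos
    · simpa [Real.sign_of_neg hneg, neg_mul, Function.comp_def] using (hasDerivAt_abs_neg hneg).comp t hs
    · simpa [Real.sign_of_pos hpos, Function.comp_def] using (hasDerivAt_abs_pos hpos).comp t hs
  have hq := hasDerivAt_quot (ne_of_gt hm) hxt habs
  convert hq using 1
  field_simp
  ring

noncomputable def gfun (m x : ℝ) : ℝ → ℝ := fun t =>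
  if Real.sin (m * t) = 0 then |Real.cos (m * t)| / (x - t)
  else Real.cos (m * t) * Real.sign (Real.sin (m * t)) / (x - t)
    + |Real.sin (m * t)| / (m * (x - t)^2)

lemma gfun_measurable (m x : ℝ) : Measurable (gfun m x) := by
  unfold gfun
  have hsin : Measurable fun t : ℝ => Real.sin (m * t) :=
    Real.continuous_sin.measurable.comp (measurable_const_mul m)
  have hcos : Measurable fun t : ℝ => Real.cos (m * t) :=
    Real.continuous_cos.measurable.comp (measurable_const_mul m)
  have hxm : Measurable fun t : ℝ => x - t := measurable_const.sub measurable_id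
  apply Measurable.ite (hsin (measurableSet_singleton 0))
  · exact (hcos.abs).div hxm
  · exact ((hcos.mul (measurable_realSign.comp hsin)).div hxm).add
      ((hsin.abs).div ((measurable_const.mul (hxm.pow measurable_const))))

lemma core_bound {m : ℕ} (hm : 1 ≤ m) {x c e d : ℝ} (hd : 0 < d) (hce : c ≤ e)
    (hdist : ∀ t ∈ Icc c e, d ≤ |x - t|) :
    |∫ t in c..e, Real.cos (m * t) * Real.sign (Real.sin (m * t)) / (x - t)|
      ≤ (2 / d + (e - c) / d ^ 2) / m := by
  have hm0 : (0 : ℝ) < m := by exact_mod_cast hm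
  have hxne : ∀ t ∈ Icc c e, x - t ≠ 0 := by
    intro t ht h
    have := hdist t ht
    rw [h, abs_zero] at this; linarith
  have hxabs : ∀ t ∈ Icc c e, d ≤ |x - t| := hdist
  set f : ℝ → ℝ := fun u => |Real.sin (m * u)| / ((m : ℝ) * (x - u)) with hf
  -- derivative
  have hderiv : ∀ t ∈ Ioo c e, HasDerivWithinAt f (gfun (m : ℝ) x t) (Ioi t) t := by
    intro t ht
    have ht' : t ∈ Icc c e := Ioo_subset_Icc_self ht
    by_cases h0 : Real.sin (m * t) = 0
    · rw [show gfun (m : ℝ) x t = |Real.cos (m * t)| / (x - t) from if_pos h0]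
      exact hasDerivWithin_zero hm0 (hxne t ht') h0
    · rw [show gfun (m : ℝ) x t = Real.cos (m * t) * Real.sign (Real.sin (m * t)) / (x - t)
          + |Real.sin (m * t)| / ((m : ℝ) * (x - t)^2) from if_neg h0]
      exact (hasDerivWithin_ne hm0 (hxne t ht') h0).hasDerivWithinAt
  have hcont : ContinuousOn f (Icc c e) := by
    apply ContinuousOn.div
    · exact (continuous_abs.comp (Real.continuous_sin.comp
        (continuous_const.mul continuous_id))).continuousOn
    · exact (continuous_const.mul (continuous_const.sub continuous_id)).continuousOn
    · intro t ht; exact mul_ne_zero (ne_of_gt hm0) (hxne t ht)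
  -- bound for g
  have habs_le : ∀ t ∈ Icc c e, |x - t| ≠ 0 := fun t ht => abs_ne_zero.mpr (hxne t ht)
  have hgb : ∀ t ∈ Icc c e, |gfun (m : ℝ) x t| ≤ 1 / d + 1 / ((m : ℝ) * d ^ 2) := by
    intro t ht
    have hdt := hdist t ht
    have hinv : ∀ y : ℝ, |y| ≤ 1 → |y / (x - t)| ≤ 1 / d := by
      intro y hy
      rw [abs_div]
      exact div_le_div₀ zero_le_one hy hd hdt
    unfold gfun
    by_cases h0 : Real.sin (↑m * t) = 0
    · rw [if_pos h0]
      have := hinv (|Real.cos (↑m * t)|) (by rw [abs_abs]; exact Real.abs_cos_le_one _)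
      have h2 : (0:ℝ) ≤ 1 / ((m:ℝ) * d ^ 2) := by positivity
      linarith
    · rw [if_neg h0]
      have hA := hinv (Real.cos (↑m * t) * Real.sign (Real.sin (↑m * t)))
        (by
          rw [abs_mul]
          have h1 := Real.abs_cos_le_one (↑m * t)
          have h2 : |Real.sign (Real.sin (↑m * t))| ≤ 1 := by
            rcases Real.sign_apply_eq (Real.sin (↑m * t)) with h | h | h <;> rw [h] <;> norm_num
          nlinarith [abs_nonneg (Real.cos (↑m * t)), abs_nonneg (Real.sign (Real.sin (↑m * t)))])
      have hB : |(|Real.sin (↑m * t)|) / ((m:ℝ) * (x - t) ^ 2)| ≤ 1 / ((m:ℝ) * d ^ 2) := by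
        rw [abs_div, abs_abs]
        have hd2 : (0:ℝ) < (m:ℝ) * d ^ 2 := by positivity
        have hle : (m:ℝ) * d ^ 2 ≤ |(m:ℝ) * (x - t) ^ 2| := by
          rw [abs_mul, abs_of_nonneg (by positivity : (0:ℝ) ≤ (m:ℝ))]
          have h3 : d ^ 2 ≤ (x - t) ^ 2 := by
            rw [← sq_abs (x - t)]
            exact pow_le_pow_left₀ hd.le hdt 2
          have h4 : |(x - t) ^ 2| = (x - t) ^ 2 := abs_of_nonneg (sq_nonneg _)
          nlinarith
        exact div_le_div₀ zero_le_one (Real.abs_sin_le_one _) hd2 hle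
      calc |Real.cos (↑m * t) * Real.sign (Real.sin (↑m * t)) / (x - t)
            + |Real.sin (↑m * t)| / ((m:ℝ) * (x - t) ^ 2)|
          ≤ |Real.cos (↑m * t) * Real.sign (Real.sin (↑m * t)) / (x - t)|
            + |(|Real.sin (↑m * t)|) / ((m:ℝ) * (x - t) ^ 2)| := abs_add_le _ _
        _ ≤ 1 / d + 1 / ((m:ℝ) * d ^ 2) := add_le_add hA hB
  -- integrability of g
  have hmeas : Measurable (gfun (m : ℝ) x) := gfun_measurable _ _
  have hint : IntervalIntegrable (gfun (m : ℝ) x) volume c e := by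
    rw [intervalIntegrable_iff_integrableOn_Ioc_of_le hce]
    apply Integrable.mono' (g := fun _ => 1 / d + 1 / ((m : ℝ) * d ^ 2))
      (integrableOn_const measure_Ioc_lt_top.ne)
      hmeas.aestronglyMeasurable
    rw [ae_restrict_iff' measurableSet_Ioc]
    filter_upwards with t ht
    rw [Real.norm_eq_abs]
    exact hgb t (Ioc_subset_Icc_self ht)
  -- FTC
  have hftc := intervalIntegral.integral_eq_sub_of_hasDeriv_right_of_le hce hcont hderiv hint
  -- split g a.e. into A + B
  set A : ℝ → ℝ := fun t => Real.cos (↑m * t) * Real.sign (Real.sin (↑m * t)) / (x - t) with hA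
  set Bf : ℝ → ℝ := fun t => |Real.sin (↑m * t)| / ((m : ℝ) * (x - t) ^ 2) with hBf
  have hmA : Measurable A := by
    have hsin : Measurable fun t : ℝ => Real.sin (↑m * t) :=
      Real.continuous_sin.measurable.comp (measurable_const_mul _)
    have hcos : Measurable fun t : ℝ => Real.cos (↑m * t) :=
      Real.continuous_cos.measurable.comp (measurable_const_mul _)
    exact (hcos.mul (measurable_realSign.comp hsin)).div (measurable_const.sub measurable_id)
  have hAb : ∀ t ∈ Icc c e, |A t| ≤ 1 / d := by
    intro t ht
    rw [hA]
    simp only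
    rw [abs_div]
    have h2 : |Real.sign (Real.sin (↑m * t))| ≤ 1 := by
      rcases Real.sign_apply_eq (Real.sin (↑m * t)) with h | h | h <;> rw [h] <;> norm_num
    have h1 := Real.abs_cos_le_one (↑m * t)
    have : |Real.cos (↑m * t) * Real.sign (Real.sin (↑m * t))| ≤ 1 := by
      rw [abs_mul]
      nlinarith [abs_nonneg (Real.cos (↑m * t)), abs_nonneg (Real.sign (Real.sin (↑m * t)))]
    exact div_le_div₀ zero_le_one this hd (hdist t ht)
  have hAint : IntervalIntegrable A volume c e := by
    rw [intervalIntegrable_iff_integrableOn_Ioc_of_le hce]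
    apply Integrable.mono' (g := fun _ => 1 / d)
      (integrableOn_const measure_Ioc_lt_top.ne) hmA.aestronglyMeasurable
    rw [ae_restrict_iff' measurableSet_Ioc]
    filter_upwards with t ht
    rw [Real.norm_eq_abs]
    exact hAb t (Ioc_subset_Icc_self ht)
  have hBcont : ContinuousOn Bf (Icc c e) := by
    apply ContinuousOn.div
    · exact (continuous_abs.comp (Real.continuous_sin.comp
        (continuous_const.mul continuous_id))).continuousOn
    · exact (continuous_const.mul ((continuous_const.sub continuous_id).pow 2)).continuousOn
    · intro t ht
      exact mul_ne_zero (ne_of_gt hm0) (pow_ne_zero 2 (hxne t ht))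
  have hBint : IntervalIntegrable Bf volume c e :=
    hBcont.intervalIntegrable_of_Icc hce
  have hcongr : ∫ t in c..e, gfun (m : ℝ) x t = ∫ t in c..e, (A t + Bf t) := by
    apply intervalIntegral.integral_congr_ae
    have hnull : ∀ᵐ t : ℝ ∂volume, Real.sin (↑m * t) ≠ 0 := by
      rw [ae_iff]
      push_neg
      exact Set.Countable.measure_zero (countable_sinzero (ne_of_gt hm0)) _
    filter_upwards [hnull] with t ht _
    unfold gfun
    rw [if_neg ht]
  have hsplit : ∫ t in c..e, (A t + Bf t) = (∫ t in c..e, A t) + ∫ t in c..e, Bf t :=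
    intervalIntegral.integral_add hAint hBint
  have hmain : ∫ t in c..e, A t = (f e - f c) - ∫ t in c..e, Bf t := by
    rw [← hftc, hcongr, hsplit]; ring
  -- bounds
  have hfb : ∀ t ∈ Icc c e, |f t| ≤ 1 / ((m : ℝ) * d) := by
    intro t ht
    rw [hf]
    simp only
    rw [abs_div, abs_abs, abs_mul, abs_of_nonneg (le_of_lt hm0)]
    have hle : (m : ℝ) * d ≤ (m : ℝ) * |x - t| :=
      mul_le_mul_of_nonneg_left (hdist t ht) hm0.le
    exact div_le_div₀ zero_le_one (Real.abs_sin_le_one _) (by positivity) hle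
  have hBb : |∫ t in c..e, Bf t| ≤ 1 / ((m : ℝ) * d ^ 2) * |e - c| := by
    rw [← Real.norm_eq_abs (∫ t in c..e, Bf t)]
    apply intervalIntegral.norm_integral_le_of_norm_le_const
    intro t ht
    rw [uIoc_of_le hce] at ht
    have ht' := Ioc_subset_Icc_self ht
    rw [Real.norm_eq_abs, hBf]
    simp only
    rw [abs_div]
    have hd2 : (0:ℝ) < (m:ℝ) * d ^ 2 := by positivity
    have hle : (m:ℝ) * d ^ 2 ≤ |(m:ℝ) * (x - t) ^ 2| := by
      rw [abs_mul, abs_of_nonneg hm0.le]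
      have h3 : d ^ 2 ≤ (x - t) ^ 2 := by
        rw [← sq_abs (x - t)]
        exact pow_le_pow_left₀ hd.le (hdist t ht') 2
      have h4 : |(x - t) ^ 2| = (x - t) ^ 2 := abs_of_nonneg (sq_nonneg _)
      nlinarith
    rw [abs_abs]
    exact div_le_div₀ zero_le_one (Real.abs_sin_le_one _) hd2 hle
  have hec : |e - c| = e - c := abs_of_nonneg (by linarith)
  have hfe := hfb e (right_mem_Icc.mpr hce)
  have hfc := hfb c (left_mem_Icc.mpr hce)
  rw [hmain]
  have tri : ∀ u v : ℝ, |u - v| ≤ |u| + |v| := fun u v => by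
    rw [sub_eq_add_neg]
    exact (abs_add_le _ _).trans (by rw [abs_neg])
  have h1 : |f e - f c - ∫ t in c..e, Bf t| ≤ |f e| + |f c| + |∫ t in c..e, Bf t| := by
    have t1 := tri (f e - f c) (∫ t in c..e, Bf t)
    have t2 := tri (f e) (f c)
    linarith
  rw [hec] at hBb
  have heq : 1 / ((m:ℝ) * d) + 1 / ((m:ℝ) * d) + 1 / ((m:ℝ) * d ^ 2) * (e - c)
      = (2 / d + (e - c) / d ^ 2) / m := by
    field_simp
    ring
  linarith

lemma II_of_bound {h : ℝ → ℝ} (hmeas : Measurable h) {C : ℝ} (hb : ∀ t, |h t| ≤ C)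
    (a b : ℝ) : IntervalIntegrable h volume a b := by
  rw [intervalIntegrable_iff]
  apply Integrable.mono' (g := fun _ => C)
    (integrableOn_const measure_Ioc_lt_top.ne) hmeas.aestronglyMeasurable
  filter_upwards with t
  rw [Real.norm_eq_abs]
  exact hb t

lemma mid_bound {m : ℕ} (hm : 1 ≤ m) {x c e d : ℝ} (hd : 0 < d)
    (hsub : Ioo c e ⊆ Icc (-π) π) (hdistI : ∀ t ∈ Ioo c e, d ≤ |x - t|) :
    |∫ t in (-π)..π, (Ioo c e).indicator 1 t * Real.cos (↑m * t)
        * Real.sign (Real.sin (↑m * t)) / (x - t)|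
      ≤ (2 / d + 2 * π / d ^ 2) / ↑m := by
  have hm0 : (0 : ℝ) < m := by exact_mod_cast hm
  have hpi := Real.pi_pos
  have hRHS : 0 ≤ (2 / d + 2 * π / d ^ 2) / ↑m := by positivity
  set h : ℝ → ℝ := fun t => (Ioo c e).indicator 1 t * Real.cos (↑m * t)
    * Real.sign (Real.sin (↑m * t)) / (x - t) with hhdef
  rcases le_or_gt e c with hec | hce
  · have : ∀ t, h t = 0 := by
      intro t
      have : Ioo c e = ∅ := Ioo_eq_empty (by intro hlt; exact absurd hec (not_le.mpr hlt))
      simp [hhdef, this]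
    rw [intervalIntegral.integral_congr (g := fun _ => 0) (fun t _ => this t)]
    simp [hRHS]
  -- c < e
  have hclIcc : Icc c e ⊆ Icc (-π) π := by
    rw [← closure_Ioo (ne_of_lt hce)]
    exact closure_minimal hsub isClosed_Icc
  have hdIcc : ∀ t ∈ Icc c e, d ≤ |x - t| := by
    have hclosed : IsClosed {t : ℝ | d ≤ |x - t|} :=
      isClosed_le continuous_const ((continuous_const.sub continuous_id).abs)
    have : Icc c e ⊆ {t : ℝ | d ≤ |x - t|} := by
      rw [← closure_Ioo (ne_of_lt hce)]
      exact closure_minimal hdistI hclosed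
    exact fun t ht => this ht
  have hcmem : c ∈ Icc (-π) π := hclIcc (left_mem_Icc.mpr hce.le)
  have hemem : e ∈ Icc (-π) π := hclIcc (right_mem_Icc.mpr hce.le)
  -- integrability of h on subintervals
  have hmeas : Measurable h := by
    have hsin : Measurable fun t : ℝ => Real.sin (↑m * t) :=
      Real.continuous_sin.measurable.comp (measurable_const_mul _)
    have hcos : Measurable fun t : ℝ => Real.cos (↑m * t) :=
      Real.continuous_cos.measurable.comp (measurable_const_mul _)
    exact (((measurable_one.indicator measurableSet_Ioo).mul hcos).mul
      (measurable_realSign.comp hsin)).div (measurable_const.sub measurable_id)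
  have hbound : ∀ t, |h t| ≤ 1 / d := by
    intro t
    by_cases ht : t ∈ Ioo c e
    · rw [hhdef]
      simp only [indicator_of_mem ht, Pi.one_apply, one_mul]
      rw [abs_div, abs_mul]
      have h1 := Real.abs_cos_le_one (↑m * t)
      have h2 : |Real.sign (Real.sin (↑m * t))| ≤ 1 := by
        rcases Real.sign_apply_eq (Real.sin (↑m * t)) with hs | hs | hs <;> rw [hs] <;> norm_num
      have h3 : |Real.cos (↑m * t) * Real.sign (Real.sin (↑m * t))| ≤ 1 := by
        rw [abs_mul]
        nlinarith [abs_nonneg (Real.cos (↑m * t)), abs_nonneg (Real.sign (Real.sin (↑m * t)))]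
      rw [← abs_mul]
      exact div_le_div₀ zero_le_one h3 hd (hdistI t ht)
    · rw [hhdef]
      simp only [indicator_of_notMem ht]
      simp [hd.le]
  have hII : ∀ a b : ℝ, IntervalIntegrable h volume a b := II_of_bound hmeas hbound
  -- split the integral
  have hsplit1 : (∫ t in (-π)..c, h t) + ∫ t in c..π, h t = ∫ t in (-π)..π, h t :=
    intervalIntegral.integral_add_adjacent_intervals (hII _ _) (hII _ _)
  have hsplit2 : (∫ t in c..e, h t) + ∫ t in e..π, h t = ∫ t in c..π, h t :=
    intervalIntegral.integral_add_adjacent_intervals (hII _ _) (hII _ _)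
  have hzero1 : ∫ t in (-π)..c, h t = 0 := by
    rw [intervalIntegral.integral_congr (g := fun _ => 0)]
    · simp
    · intro t ht
      rw [uIcc_of_le hcmem.1] at ht
      have : t ∉ Ioo c e := fun hmem => absurd ht.2 (not_le.mpr hmem.1)
      simp [hhdef, indicator_of_notMem this]
  have hzero2 : ∫ t in e..π, h t = 0 := by
    rw [intervalIntegral.integral_congr (g := fun _ => 0)]
    · simp
    · intro t ht
      rw [uIcc_of_le hemem.2] at ht
      have : t ∉ Ioo c e := fun hmem => absurd ht.1 (not_le.mpr hmem.2)
      simp [hhdef, indicator_of_notMem this]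
  have hmidd : ∫ t in c..e, h t
      = ∫ t in c..e, Real.cos (↑m * t) * Real.sign (Real.sin (↑m * t)) / (x - t) := by
    apply intervalIntegral.integral_congr_ae
    have hne : ∀ᵐ t : ℝ ∂volume, t ≠ e := by
      rw [ae_iff]
      simp only [not_not, Set.setOf_eq_eq_singleton]
      exact measure_singleton e
    filter_upwards [hne] with t htne ht
    rw [uIoc_of_le hce.le] at ht
    have : t ∈ Ioo c e := ⟨ht.1, lt_of_le_of_ne ht.2 htne⟩
    simp [hhdef, indicator_of_mem this]
  have htot : ∫ t in (-π)..π, h t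
      = ∫ t in c..e, Real.cos (↑m * t) * Real.sign (Real.sin (↑m * t)) / (x - t) := by
    rw [← hsplit1, ← hsplit2, hzero1, hzero2, hmidd]; ring
  rw [show (∫ t in (-π)..π, (Ioo c e).indicator 1 t * Real.cos (↑m * t)
      * Real.sign (Real.sin (↑m * t)) / (x - t)) = ∫ t in (-π)..π, h t from rfl, htot]
  have hcb := core_bound hm hd hce.le hdIcc
  apply hcb.trans
  have hlen : e - c ≤ 2 * π := by
    have := hcmem.1; have := hemem.2; linarith
  gcongr

lemma indicator_union_eq (n : ℕ) (a b : Fin n → ℝ) (t : ℝ) :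
    (⋃ k, Ioo (a k) (b k)).indicator (1 : ℝ → ℝ) t
      = ∑ S ∈ (Finset.univ : Finset (Fin n)).powerset,
          (if h : S.Nonempty
            then (-(-1:ℝ)^S.card) * (Ioo (S.sup' h a) (S.inf' h b)).indicator (1 : ℝ → ℝ) t
            else 0) := by
  classical
  set χ : Fin n → ℝ := fun k => (Ioo (a k) (b k)).indicator 1 t with hχ
  have hχval : ∀ k, χ k = 0 ∨ χ k = 1 := by
    intro k
    by_cases h : t ∈ Ioo (a k) (b k)
    · right; simp [hχ, indicator_of_mem h]
    · left; simp [hχ, indicator_of_notMem h]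
  have key1 : (⋃ k, Ioo (a k) (b k)).indicator (1 : ℝ → ℝ) t
      = 1 - ∏ k, (1 - χ k) := by
    by_cases ht : t ∈ ⋃ k, Ioo (a k) (b k)
    · rw [indicator_of_mem ht]
      obtain ⟨k, hk⟩ := mem_iUnion.mp ht
      rw [Finset.prod_eq_zero (Finset.mem_univ k)]
      · simp
      · simp [hχ, indicator_of_mem hk]
    · rw [indicator_of_notMem ht]
      rw [Finset.prod_eq_one]
      · simp
      · intro k _
        have : t ∉ Ioo (a k) (b k) := fun hmem => ht (mem_iUnion.mpr ⟨k, hmem⟩)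
        simp [hχ, indicator_of_notMem this]
  have key2 : ∏ k, ((1:ℝ) - χ k)
      = ∑ S ∈ (Finset.univ : Finset (Fin n)).powerset, (-1:ℝ)^S.card * ∏ k ∈ S, χ k := by
    have h1 : ∀ k ∈ (Finset.univ : Finset (Fin n)), (1:ℝ) - χ k = -χ k + 1 := by
      intro k _; ring
    rw [Finset.prod_congr rfl h1, Finset.prod_add]
    apply Finset.sum_congr rfl
    intro S _
    rw [Finset.prod_const_one, mul_one]
    rw [show (fun k => -χ k) = fun k => (-1 : ℝ) * χ k from by funext k; ring]
    rw [Finset.prod_mul_distrib, Finset.prod_const]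
  have key3 : ∀ S : Finset (Fin n), ∀ h : S.Nonempty,
      ∏ k ∈ S, χ k = (Ioo (S.sup' h a) (S.inf' h b)).indicator (1 : ℝ → ℝ) t := by
    intro S h
    by_cases hmem : t ∈ Ioo (S.sup' h a) (S.inf' h b)
    · rw [indicator_of_mem hmem, Pi.one_apply]
      apply Finset.prod_eq_one
      intro k hk
      have h1 : a k < t := lt_of_le_of_lt (Finset.le_sup' a hk) hmem.1
      have h2 : t < b k := lt_of_lt_of_le hmem.2 (Finset.inf'_le b hk)
      show (Ioo (a k) (b k)).indicator (1 : ℝ → ℝ) t = 1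
      exact indicator_of_mem (⟨h1, h2⟩ : t ∈ Ioo (a k) (b k)) 1
    · rw [indicator_of_notMem hmem]
      rw [mem_Ioo, not_and_or] at hmem
      rcases hmem with hm | hm
      · rw [not_lt] at hm
        obtain ⟨k, hk, hak⟩ := (Finset.le_sup'_iff h).mp hm
        apply Finset.prod_eq_zero hk
        have : t ∉ Ioo (a k) (b k) := fun hc => absurd hc.1 (not_lt.mpr hak)
        simp [hχ, indicator_of_notMem this]
      · rw [not_lt] at hm
        obtain ⟨k, hk, hbk⟩ := (Finset.inf'_le_iff h).mp hm
        apply Finset.prod_eq_zero hk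
        have : t ∉ Ioo (a k) (b k) := fun hc => absurd hc.2 (not_lt.mpr hbk)
        simp [hχ, indicator_of_notMem this]
  rw [key1, key2]
  have hempty : (∅ : Finset (Fin n)) ∈ (Finset.univ : Finset (Fin n)).powerset :=
    Finset.empty_mem_powerset _
  rw [← Finset.add_sum_erase _ _ hempty, ← Finset.add_sum_erase _ _ hempty]
  have hcongr : ∑ S ∈ ((Finset.univ : Finset (Fin n)).powerset).erase ∅,
      (if h : S.Nonempty
        then (-(-1:ℝ)^S.card) * (Ioo (S.sup' h a) (S.inf' h b)).indicator (1 : ℝ → ℝ) t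
        else 0)
      = ∑ S ∈ ((Finset.univ : Finset (Fin n)).powerset).erase ∅,
          -((-1:ℝ)^S.card * ∏ k ∈ S, χ k) := by
    apply Finset.sum_congr rfl
    intro S hS
    have hne : S.Nonempty := Finset.nonempty_iff_ne_empty.mpr (Finset.ne_of_mem_erase hS)
    rw [dif_pos hne, ← key3 S hne]
    ring
  rw [hcongr, Finset.sum_neg_distrib]
  simp [Finset.not_nonempty_empty]

lemma single_II {m x c e d : ℝ} (hd : 0 < d) (hdistI : ∀ t ∈ Ioo c e, d ≤ |x - t|)
    (p q : ℝ) :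
    IntervalIntegrable (fun t => (Ioo c e).indicator (1 : ℝ → ℝ) t * Real.cos (m * t)
      * Real.sign (Real.sin (m * t)) / (x - t)) volume p q := by
  apply II_of_bound (C := 1 / d)
  · have hsin : Measurable fun t : ℝ => Real.sin (m * t) :=
      Real.continuous_sin.measurable.comp (measurable_const_mul _)
    have hcos : Measurable fun t : ℝ => Real.cos (m * t) :=
      Real.continuous_cos.measurable.comp (measurable_const_mul _)
    exact (((measurable_one.indicator measurableSet_Ioo).mul hcos).mul
      (measurable_realSign.comp hsin)).div (measurable_const.sub measurable_id)
  · intro t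
    by_cases ht : t ∈ Ioo c e
    · simp only [indicator_of_mem ht, Pi.one_apply, one_mul]
      rw [abs_div]
      have h1 := Real.abs_cos_le_one (m * t)
      have h2 : |Real.sign (Real.sin (m * t))| ≤ 1 := by
        rcases Real.sign_apply_eq (Real.sin (m * t)) with hs | hs | hs <;> rw [hs] <;> norm_num
      have h3 : |Real.cos (m * t) * Real.sign (Real.sin (m * t))| ≤ 1 := by
        rw [abs_mul]
        nlinarith [abs_nonneg (Real.cos (m * t)), abs_nonneg (Real.sign (Real.sin (m * t)))]
      exact div_le_div₀ zero_le_one h3 hd (hdistI t ht)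
    · simp only [indicator_of_notMem ht]
      simp [hd.le]


/-- Let `E ⊂ [-π, π]` be a finite union of intervals and
`F ⊂ [-π, π]` with `dist(E, F) > 0`. Then
`∫_{-π}^{π} 𝟙_E(t) cos(mt) sign(sin mt)/(x - t) dt → 0` as `m → ∞`,
uniformly for `x ∈ F`. -/
theorem stmt15 (n : ℕ) (a b : Fin n → ℝ)
    (E : Set ℝ) (hE : E = ⋃ k, Ioo (a k) (b k))
    (hEsub : E ⊆ Icc (-π) π)
    (F : Set ℝ) (hFsub : F ⊆ Icc (-π) π)
    (d : ℝ) (hd : 0 < d) (hdist : ∀ x ∈ F, ∀ t ∈ E, d ≤ |x - t|) :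
    TendstoUniformlyOn
      (fun (m : ℕ) (x : ℝ) =>
        ∫ t in (-π)..π,
          E.indicator 1 t * Real.cos (m * t) * Real.sign (Real.sin (m * t))
            / (x - t))
      (fun _ : ℝ => 0) atTop F := by
  classical
  have hpi := Real.pi_pos
  set C : ℝ := 2 ^ n * (2 / d + 2 * π / d ^ 2) with hC
  have hC0 : 0 ≤ C := by positivity
  have hbound : ∀ m : ℕ, 1 ≤ m → ∀ x ∈ F,
      |∫ t in (-π)..π, E.indicator 1 t * Real.cos (↑m * t)
        * Real.sign (Real.sin (↑m * t)) / (x - t)| ≤ C / m := by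
    intro m hm x hx
    have hm0 : (0 : ℝ) < m := by exact_mod_cast hm
    have hsubI : ∀ (S : Finset (Fin n)) (h : S.Nonempty),
        Ioo (S.sup' h a) (S.inf' h b) ⊆ E := by
      intro S h t ht
      obtain ⟨k, hk⟩ := h
      rw [hE]
      exact mem_iUnion.mpr ⟨k, ⟨lt_of_le_of_lt (Finset.le_sup' a hk) ht.1,
        lt_of_lt_of_le ht.2 (Finset.inf'_le b hk)⟩⟩
    have hdistS : ∀ (S : Finset (Fin n)) (h : S.Nonempty),
        ∀ t ∈ Ioo (S.sup' h a) (S.inf' h b), d ≤ |x - t| :=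
      fun S h t ht => hdist x hx t (hsubI S h ht)
    have hpt : ∀ t : ℝ, E.indicator 1 t * Real.cos (↑m * t)
          * Real.sign (Real.sin (↑m * t)) / (x - t)
        = ∑ S ∈ (Finset.univ : Finset (Fin n)).powerset,
            (if h : S.Nonempty then (-(-1:ℝ)^S.card) *
              ((Ioo (S.sup' h a) (S.inf' h b)).indicator (1 : ℝ → ℝ) t
                * Real.cos (↑m * t) * Real.sign (Real.sin (↑m * t)) / (x - t)) else 0) := by
      intro t
      rw [hE, indicator_union_eq n a b t, Finset.sum_mul, Finset.sum_mul, Finset.sum_div]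
      apply Finset.sum_congr rfl
      intro S _
      split_ifs with h
      · ring
      · simp
    have hIIS : ∀ S ∈ (Finset.univ : Finset (Fin n)).powerset,
        IntervalIntegrable (fun t =>
          (if h : S.Nonempty then (-(-1:ℝ)^S.card) *
              ((Ioo (S.sup' h a) (S.inf' h b)).indicator (1 : ℝ → ℝ) t
                * Real.cos (↑m * t) * Real.sign (Real.sin (↑m * t)) / (x - t)) else 0))
          volume (-π) π := by
      intro S _
      by_cases h : S.Nonempty
      · simp only [dif_pos h]
        exact (single_II hd (hdistS S h) (-π) π).const_mul _
      · simp only [dif_neg h]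
        exact intervalIntegrable_const
    have hswap : (∫ t in (-π)..π, E.indicator 1 t * Real.cos (↑m * t)
          * Real.sign (Real.sin (↑m * t)) / (x - t))
        = ∑ S ∈ (Finset.univ : Finset (Fin n)).powerset,
            ∫ t in (-π)..π, (if h : S.Nonempty then (-(-1:ℝ)^S.card) *
              ((Ioo (S.sup' h a) (S.inf' h b)).indicator (1 : ℝ → ℝ) t
                * Real.cos (↑m * t) * Real.sign (Real.sin (↑m * t)) / (x - t)) else 0) := by
      rw [intervalIntegral.integral_congr (g := fun t =>
        ∑ S ∈ (Finset.univ : Finset (Fin n)).powerset,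
            (if h : S.Nonempty then (-(-1:ℝ)^S.card) *
              ((Ioo (S.sup' h a) (S.inf' h b)).indicator (1 : ℝ → ℝ) t
                * Real.cos (↑m * t) * Real.sign (Real.sin (↑m * t)) / (x - t)) else 0))
        (fun t _ => hpt t)]
      exact intervalIntegral.integral_finset_sum hIIS
    rw [hswap]
    have hterm : ∀ S ∈ (Finset.univ : Finset (Fin n)).powerset,
        |∫ t in (-π)..π, (if h : S.Nonempty then (-(-1:ℝ)^S.card) *
              ((Ioo (S.sup' h a) (S.inf' h b)).indicator (1 : ℝ → ℝ) t
                * Real.cos (↑m * t) * Real.sign (Real.sin (↑m * t)) / (x - t)) else 0)|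
          ≤ (2 / d + 2 * π / d ^ 2) / ↑m := by
      intro S _
      by_cases h : S.Nonempty
      · simp only [dif_pos h]
        rw [intervalIntegral.integral_const_mul, abs_mul]
        have hcoef : |(-(-1:ℝ)^S.card)| = 1 := by
          rw [abs_neg, abs_pow, abs_neg, abs_one, one_pow]
        rw [hcoef, one_mul]
        apply mid_bound hm hd
        · exact fun t ht => hEsub (hsubI S h ht)
        · exact hdistS S h
      · simp only [dif_neg h]
        rw [intervalIntegral.integral_zero, abs_zero]
        positivity
    calc |∑ S ∈ (Finset.univ : Finset (Fin n)).powerset, _|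
        ≤ ∑ S ∈ (Finset.univ : Finset (Fin n)).powerset, |∫ t in (-π)..π,
            (if h : S.Nonempty then (-(-1:ℝ)^S.card) *
              ((Ioo (S.sup' h a) (S.inf' h b)).indicator (1 : ℝ → ℝ) t
                * Real.cos (↑m * t) * Real.sign (Real.sin (↑m * t)) / (x - t)) else 0)| :=
          Finset.abs_sum_le_sum_abs _ _
      _ ≤ (Finset.univ : Finset (Fin n)).powerset.card • ((2 / d + 2 * π / d ^ 2) / ↑m) :=
          Finset.sum_le_card_nsmul _ _ _ hterm
      _ = C / m := by
          rw [Finset.card_powerset, Finset.card_univ, Fintype.card_fin, nsmul_eq_mul, hC]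
          push_cast
          ring
  rw [Metric.tendstoUniformlyOn_iff]
  intro ε hε
  have hCdiv : Tendsto (fun m : ℕ => C / m) atTop (nhds 0) :=
    tendsto_const_div_atTop_nhds_zero_nat C
  have h1 : ∀ᶠ m : ℕ in atTop, C / m < ε := hCdiv.eventually (gt_mem_nhds hε)
  filter_upwards [h1, eventually_ge_atTop 1] with m hm1 hm2
  intro x hx
  rw [dist_comm, dist_zero_right, Real.norm_eq_abs]
  exact lt_of_le_of_lt (hbound m hm2 x hx) hm1
end
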